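/- arXiv:math/0505081 — 3 statements merged into one kernel-verified Lean document; each statement's English description precedes it below -/
import Mathlib

section
/- Let Γ denote the Euler Gamma function and for integers m ≥ 2 and N ≥ 4 set c_m(N) := −m·( log(Γ(m/2)/Γ(1/2)) − m(m−1)/(4N) + 1/(12N) ). Then m · log( Γ(N + m/2)·Γ(1/2) / ( Γ(m/2)·Γ(N + 1/2) ) ) ≤ (m(m−1)/2)·log N + c_m(N). -/
lemma logGamma_add_half_le (x : ℝ) (hx : 0 < x) :
    Real.log (Real.Gamma (x + 1/2)) ≤ Real.log (Real.Gamma x) + 1/2 * Real.log x := by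
  have hc := Real.convexOn_log_Gamma
  have h := hc.2 (Set.mem_Ioi.2 hx) (Set.mem_Ioi.2 (by linarith : (0:ℝ) < x + 1))
      (by norm_num : (0:ℝ) ≤ (1/2:ℝ)) (by norm_num : (0:ℝ) ≤ (1/2:ℝ))
      (by norm_num : (1/2:ℝ) + 1/2 = 1)
  simp only [Function.comp, smul_eq_mul] at h
  have hmid : (1/2 : ℝ) * x + (1/2 : ℝ) * (x + 1) = x + 1/2 := by ring
  rw [hmid, Real.Gamma_add_one hx.ne',
    Real.log_mul hx.ne' (Real.Gamma_pos_of_pos hx).ne'] at h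
  linarith

lemma logGamma_halfsteps (x : ℝ) (hx : 0 < x) : ∀ k : ℕ,
    Real.log (Real.Gamma (x + k/2)) ≤
      Real.log (Real.Gamma x) + 1/2 * ∑ j ∈ Finset.range k, Real.log (x + j/2) := by
  intro k
  induction k with
  | zero => simp
  | succ k ih =>
    have hx' : 0 < x + k/2 := by positivity
    have h1 := logGamma_add_half_le (x + k/2) hx'
    have he : x + (k:ℝ)/2 + 1/2 = x + ((k:ℕ)+1 : ℕ)/2 := by push_cast; ring
    rw [he] at h1
    rw [Finset.sum_range_succ]
    calc Real.log (Real.Gamma (x + ((k+1:ℕ):ℝ)/2))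
        ≤ Real.log (Real.Gamma (x + k/2)) + 1/2 * Real.log (x + k/2) := by
          convert h1 using 3
      _ ≤ _ := by linarith

lemma log_add_le (N t : ℝ) (hN : 0 < N) (ht : 0 ≤ t) :
    Real.log (N + t) ≤ Real.log N + t / N := by
  have h1 : Real.log ((N + t) / N) ≤ (N + t) / N - 1 :=
    Real.log_le_sub_one_of_pos (by positivity)
  rw [Real.log_div (by positivity) hN.ne'] at h1
  have : (N + t) / N - 1 = t / N := by field_simp; ring
  linarith [this ▸ h1]

/-- The Gassiat–Boucheron bound: for integers `m ≥ 2` and `N ≥ 4`,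
`m * log( Γ(N + m/2) Γ(1/2) / (Γ(m/2) Γ(N + 1/2)) ) ≤ (m(m-1)/2) log N + c_m(N)`,
where `c_m(N) = -m (log(Γ(m/2)/Γ(1/2)) - m(m-1)/(4N) + 1/(12N))`. -/
theorem gamma_ratio_log_bound (m N : ℕ) (hm : 2 ≤ m) (hN : 4 ≤ N) :
    (m : ℝ) * Real.log (Real.Gamma ((N : ℝ) + (m : ℝ) / 2) * Real.Gamma (1 / 2) /
        (Real.Gamma ((m : ℝ) / 2) * Real.Gamma ((N : ℝ) + 1 / 2))) ≤
      (m : ℝ) * ((m : ℝ) - 1) / 2 * Real.log (N : ℝ) +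
        (-(m : ℝ) * (Real.log (Real.Gamma ((m : ℝ) / 2) / Real.Gamma (1 / 2)) -
          (m : ℝ) * ((m : ℝ) - 1) / (4 * (N : ℝ)) + 1 / (12 * (N : ℝ)))) := by
  have hmR : (2:ℝ) ≤ (m:ℝ) := by exact_mod_cast hm
  have hNR : (4:ℝ) ≤ (N:ℝ) := by exact_mod_cast hN
  have hN0 : (0:ℝ) < N := by linarith
  have hx : (0:ℝ) < (N:ℝ) + 1/2 := by linarith
  have pA : 0 < Real.Gamma ((N:ℝ) + (m:ℝ)/2) := Real.Gamma_pos_of_pos (by linarith)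
  have pB : 0 < Real.Gamma (1/2 : ℝ) := Real.Gamma_pos_of_pos (by norm_num)
  have pC : 0 < Real.Gamma ((m:ℝ)/2) := Real.Gamma_pos_of_pos (by linarith)
  have pD : 0 < Real.Gamma ((N:ℝ) + 1/2) := Real.Gamma_pos_of_pos hx
  -- step bound
  have key := logGamma_halfsteps ((N:ℝ) + 1/2) hx (m - 1)
  have hcast : (((m - 1 : ℕ)):ℝ) = (m:ℝ) - 1 := by
    have : (1:ℕ) ≤ m := by omega
    push_cast [Nat.cast_sub this]; ring
  have he : (N:ℝ) + 1/2 + (((m-1:ℕ)):ℝ)/2 = (N:ℝ) + (m:ℝ)/2 := by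
    rw [hcast]; ring
  rw [he] at key
  -- bound the sum
  have hsum : ∑ j ∈ Finset.range (m-1), Real.log ((N:ℝ) + 1/2 + (j:ℝ)/2)
      ≤ ((m:ℝ) - 1) * Real.log N + (m:ℝ) * ((m:ℝ)-1) / (4 * N) := by
    have hterm : ∀ j ∈ Finset.range (m-1),
        Real.log ((N:ℝ) + 1/2 + (j:ℝ)/2)
          ≤ Real.log N + ((j:ℝ)+1)/2 / N := by
      intro j _
      have := log_add_le (N:ℝ) (((j:ℝ)+1)/2) hN0 (by positivity)
      calc Real.log ((N:ℝ) + 1/2 + (j:ℝ)/2)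
          = Real.log ((N:ℝ) + ((j:ℝ)+1)/2) := by ring_nf
        _ ≤ _ := this
    calc ∑ j ∈ Finset.range (m-1), Real.log ((N:ℝ) + 1/2 + (j:ℝ)/2)
        ≤ ∑ j ∈ Finset.range (m-1), (Real.log N + ((j:ℝ)+1)/2 / N) :=
          Finset.sum_le_sum hterm
      _ = ((m-1:ℕ):ℝ) * Real.log N
            + (∑ j ∈ Finset.range (m-1), ((j:ℝ)+1)) / (2*N) := by
          rw [Finset.sum_add_distrib, Finset.sum_const, Finset.card_range,
            nsmul_eq_mul]
          congr 1
          rw [Finset.sum_div]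
          exact Finset.sum_congr rfl fun j _ => by ring
      _ = ((m:ℝ) - 1) * Real.log N + (m:ℝ) * ((m:ℝ)-1) / (4 * N) := by
          have hg : ∑ j ∈ Finset.range (m-1), ((j:ℝ)+1)
              = ((m-1:ℕ):ℝ) * (((m-1:ℕ):ℝ) + 1) / 2 := by
            induction (m-1) with
            | zero => simp
            | succ k ih => rw [Finset.sum_range_succ, ih]; push_cast; ring
          rw [hg, hcast]
          have hm1 : (m:ℝ) - 1 + 1 = (m:ℝ) := by ring
          rw [hm1]; field_simp; ring
  -- combine
  have hmain : Real.log (Real.Gamma ((N:ℝ) + (m:ℝ)/2))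
      ≤ Real.log (Real.Gamma ((N:ℝ) + 1/2))
        + 1/2 * (((m:ℝ)-1) * Real.log N + (m:ℝ)*((m:ℝ)-1)/(4*N)) := by
    have h2 := mul_le_mul_of_nonneg_left hsum (by norm_num : (0:ℝ) ≤ 1/2)
    linarith
  -- rewrite LHS log
  rw [Real.log_div (by positivity) (by positivity), Real.log_mul pA.ne' pB.ne',
    Real.log_mul pC.ne' pD.ne', Real.log_div pC.ne' pB.ne']
  have h2m : (2:ℝ) ≤ (m:ℝ)*((m:ℝ)-1) := by nlinarith
  have hslack : 1/2 * ((m:ℝ)*((m:ℝ)-1)/(4*N)) + 1/(12*N) ≤ (m:ℝ)*((m:ℝ)-1)/(4*N) := by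
    have e : 1/2 * ((m:ℝ)*((m:ℝ)-1)/(4*N)) + 1/(12*N) = ((m:ℝ)*((m:ℝ)-1)*3 + 2)/(24*N) := by
      field_simp; ring
    have e2 : (m:ℝ)*((m:ℝ)-1)/(4*N) = ((m:ℝ)*((m:ℝ)-1)*6)/(24*N) := by
      field_simp; ring
    rw [e, e2]
    apply div_le_div_of_nonneg_right _ (by positivity)
    linarith
  have hm0 : (0:ℝ) < (m:ℝ) := by linarith
  have H1 := mul_le_mul_of_nonneg_left hmain hm0.le
  have H2 := mul_le_mul_of_nonneg_left hslack hm0.le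
  linarith
end

section
/- Let S be a finite set with card(S) = r ≥ 2 and let K : S × S → ℝ be a row-stochastic kernel (K(x,y) ≥ 0 and ∑_{y∈S} K(x,y) = 1 for every x) whose entries are uniformly bounded below: K(x,y) ≥ K* for all x,y, with K* > 0. Then there exists a unique probability vector π on S that is K-invariant (π(y) = ∑_x π(x) K(x,y) for all y), and for every x ∈ S and every integer t ≥ 1 the t-step transition probabilities satisfy ∑_{y∈S} | K^t(x,y) − π(y) | ≤ r · (1 − 2K*)^{t−1}, where K^t denotes the t-th matrix power of K. -/
open scoped BigOperators

/-- A row-stochastic kernel on a finite set of cardinality `r ≥ 2` whose entries are bounded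
below by `K* > 0` has a unique invariant probability vector `π`, and the `t`-step transition
probabilities converge to `π` uniformly geometrically:
`∑_y |K^t(x,y) - π(y)| ≤ r (1 - 2K*)^{t-1}`. -/
theorem finite_kernel_geometric_ergodicity
    (S : Type*) [Fintype S] [DecidableEq S] (r : ℕ) (hcard : Fintype.card S = r)
    (hr : 2 ≤ r) (K : Matrix S S ℝ) (Kstar : ℝ) (hKstar : 0 < Kstar)
    (hlb : ∀ x y, Kstar ≤ K x y) (hnn : ∀ x y, 0 ≤ K x y)
    (hrow : ∀ x, ∑ y, K x y = 1) :
    ∃ π : S → ℝ,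
      ((∀ y, 0 ≤ π y) ∧ (∑ y, π y) = 1 ∧ (∀ y, π y = ∑ x, π x * K x y)) ∧
      (∀ π' : S → ℝ,
        ((∀ y, 0 ≤ π' y) ∧ (∑ y, π' y) = 1 ∧ (∀ y, π' y = ∑ x, π' x * K x y)) → π' = π) ∧
      (∀ (x : S) (t : ℕ), 1 ≤ t →
        ∑ y, |(K ^ t) x y - π y| ≤ (r : ℝ) * (1 - 2 * Kstar) ^ (t - 1)) := by
  have hS : Nonempty S := by
    rw [← Fintype.card_pos_iff, hcard]; omega
  obtain ⟨x₀⟩ := hS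
  set c : ℝ := 1 - 2 * Kstar with hcdef
  have h2r : (2 : ℝ) ≤ r := by exact_mod_cast hr
  have hrK : (r : ℝ) * Kstar ≤ 1 := by
    have h1 : ∑ y : S, Kstar ≤ ∑ y, K x₀ y := Finset.sum_le_sum fun y _ => hlb x₀ y
    rw [hrow x₀, Finset.sum_const, Finset.card_univ, hcard, nsmul_eq_mul] at h1
    exact h1
  have hc0 : 0 ≤ c := by
    have : 2 * Kstar ≤ (r : ℝ) * Kstar := by nlinarith
    simp only [hcdef]; linarith
  have hc1 : c < 1 := by simp only [hcdef]; linarith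
  have hrc0 : 0 ≤ 1 - (r : ℝ) * Kstar := by linarith
  have hrc : 1 - (r : ℝ) * Kstar ≤ c := by
    have : 2 * Kstar ≤ (r : ℝ) * Kstar := by nlinarith
    simp only [hcdef]; linarith
  -- one-step contraction on zero-sum vectors
  have contract : ∀ μ : S → ℝ, (∑ x, μ x) = 0 →
      ∑ y, |∑ x, μ x * K x y| ≤ c * ∑ x, |μ x| := by
    intro μ hμ
    have key : ∀ y, |∑ x, μ x * K x y| ≤ ∑ x, |μ x| * (K x y - Kstar) := by
      intro y
      have h1 : ∑ x, μ x * K x y = ∑ x, μ x * (K x y - Kstar) := by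
        simp only [mul_sub]
        rw [Finset.sum_sub_distrib, ← Finset.sum_mul, hμ, zero_mul, sub_zero]
      rw [h1]
      calc |∑ x, μ x * (K x y - Kstar)| ≤ ∑ x, |μ x * (K x y - Kstar)| :=
            Finset.abs_sum_le_sum_abs _ _
        _ = ∑ x, |μ x| * (K x y - Kstar) := by
            refine Finset.sum_congr rfl fun x _ => ?_
            rw [abs_mul, abs_of_nonneg (show (0:ℝ) ≤ K x y - Kstar by linarith [hlb x y])]
    calc ∑ y, |∑ x, μ x * K x y| ≤ ∑ y, ∑ x, |μ x| * (K x y - Kstar) :=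
          Finset.sum_le_sum fun y _ => key y
      _ = ∑ x, |μ x| * (1 - (r : ℝ) * Kstar) := by
          rw [Finset.sum_comm]
          refine Finset.sum_congr rfl fun x _ => ?_
          rw [← Finset.mul_sum]
          congr 1
          rw [Finset.sum_sub_distrib, hrow x, Finset.sum_const, Finset.card_univ, hcard,
            nsmul_eq_mul]
      _ ≤ ∑ x, |μ x| * c := Finset.sum_le_sum fun x _ =>
          mul_le_mul_of_nonneg_left hrc (abs_nonneg _)
      _ = c * ∑ x, |μ x| := by rw [← Finset.sum_mul, mul_comm]
  -- sums are preserved by K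
  have sum_pres : ∀ μ : S → ℝ, ∑ y, (∑ x, μ x * K x y) = ∑ x, μ x := by
    intro μ
    rw [Finset.sum_comm]
    refine Finset.sum_congr rfl fun x _ => ?_
    rw [← Finset.mul_sum, hrow x, mul_one]
  -- algebraic identity for powers
  have pow_step : ∀ (t : ℕ) (v : S → ℝ) (y : S),
      ∑ x, v x * (K ^ (t + 1)) x y = ∑ z, (∑ x, v x * (K ^ t) x z) * K z y := by
    intro t v y
    rw [pow_succ]
    simp_rw [Matrix.mul_apply, Finset.mul_sum, Finset.sum_mul]
    rw [Finset.sum_comm]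
    refine Finset.sum_congr rfl fun z _ => Finset.sum_congr rfl fun x _ => ?_
    ring
  have sum_pres_pow : ∀ (t : ℕ) (μ : S → ℝ),
      ∑ z, (∑ x, μ x * (K ^ t) x z) = ∑ x, μ x := by
    intro t
    induction t with
    | zero => intro μ; simp [Matrix.one_apply]
    | succ t ih =>
      intro μ
      calc ∑ z, ∑ x, μ x * (K ^ (t + 1)) x z
          = ∑ z, ∑ w, (∑ x, μ x * (K ^ t) x w) * K w z := by
            refine Finset.sum_congr rfl fun z _ => pow_step t μ z
        _ = ∑ w, (∑ x, μ x * (K ^ t) x w) := sum_pres _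
        _ = ∑ x, μ x := ih μ
  -- iterated contraction
  have contract_pow : ∀ (t : ℕ) (μ : S → ℝ), (∑ x, μ x) = 0 →
      ∑ y, |∑ x, μ x * (K ^ t) x y| ≤ c ^ t * ∑ x, |μ x| := by
    intro t
    induction t with
    | zero =>
      intro μ hμ
      simp [Matrix.one_apply]
    | succ t ih =>
      intro μ hμ
      have hν : (∑ z, (∑ x, μ x * (K ^ t) x z)) = 0 := by
        rw [sum_pres_pow t μ, hμ]
      calc ∑ y, |∑ x, μ x * (K ^ (t + 1)) x y|
          = ∑ y, |∑ z, (∑ x, μ x * (K ^ t) x z) * K z y| := by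
            refine Finset.sum_congr rfl fun y _ => ?_
            rw [pow_step t μ y]
        _ ≤ c * ∑ z, |∑ x, μ x * (K ^ t) x z| := by
            have := contract (fun z => ∑ x, μ x * (K ^ t) x z) ?_
            · exact this
            · exact hν
        _ ≤ c * (c ^ t * ∑ x, |μ x|) := mul_le_mul_of_nonneg_left (ih μ hμ) hc0
        _ = c ^ (t + 1) * ∑ x, |μ x| := by ring
  -- invariance propagates to powers
  have invariant_pow : ∀ (v : S → ℝ), (∀ y, ∑ x, v x * K x y = v y) →
      ∀ (t : ℕ) (y : S), ∑ x, v x * (K ^ t) x y = v y := by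
    intro v hv t
    induction t with
    | zero => intro y; simp [Matrix.one_apply]
    | succ t ih =>
      intro y
      rw [pow_step t v y]
      simp_rw [ih]
      exact hv y
  -- existence of an eigenvector
  have hones : (K - 1).mulVec (fun _ => (1 : ℝ)) = 0 := by
    funext x
    simp only [Matrix.mulVec, dotProduct, Matrix.sub_apply, mul_one]
    rw [Finset.sum_sub_distrib, hrow x]
    simp [Matrix.one_apply]
  have hdet : (K - 1).det = 0 := by
    rw [← Matrix.exists_mulVec_eq_zero_iff]
    exact ⟨fun _ => 1, by intro h; exact one_ne_zero (congrFun h x₀), hones⟩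
  have hdetT : ((K - 1).transpose).det = 0 := by rw [Matrix.det_transpose]; exact hdet
  obtain ⟨w, hw0, hww⟩ := (Matrix.exists_mulVec_eq_zero_iff).mpr hdetT
  have hwinv : ∀ y, ∑ x, w x * K x y = w y := by
    intro y
    have h := congrFun hww y
    simp only [Matrix.mulVec, dotProduct, Matrix.transpose_apply, Matrix.sub_apply,
      Pi.zero_apply] at h
    have h2 : ∑ x, (K x y * w x - (1 : Matrix S S ℝ) x y * w x) = 0 := by
      rw [← h]; refine Finset.sum_congr rfl fun x _ => by ring
    rw [Finset.sum_sub_distrib] at h2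
    have h3 : ∑ x, (1 : Matrix S S ℝ) x y * w x = w y := by
      simp [Matrix.one_apply]
    rw [h3] at h2
    have := sub_eq_zero.mp h2
    rw [← this]
    refine Finset.sum_congr rfl fun x _ => mul_comm _ _
  -- the sum of w is nonzero
  have hsw : (∑ x, w x) ≠ 0 := by
    intro h
    have h1 := contract w h
    have h2 : ∑ y, |∑ x, w x * K x y| = ∑ y, |w y| := by
      refine Finset.sum_congr rfl fun y _ => by rw [hwinv y]
    rw [h2] at h1
    have hnn' : 0 ≤ ∑ y, |w y| := Finset.sum_nonneg fun y _ => abs_nonneg _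
    have h3 : ∑ y, |w y| = 0 := by nlinarith
    apply hw0
    funext y
    have := (Finset.sum_eq_zero_iff_of_nonneg (fun y _ => abs_nonneg (w y))).mp h3 y
      (Finset.mem_univ y)
    simpa [abs_eq_zero] using this
  set s : ℝ := ∑ x, w x with hsdef
  set π : S → ℝ := fun y => w y / s with hπdef
  have hπsum : ∑ y, π y = 1 := by
    simp only [hπdef]
    rw [← Finset.sum_div, div_self hsw]
  have hπinv : ∀ y, ∑ x, π x * K x y = π y := by
    intro y
    simp only [hπdef]
    simp_rw [div_mul_eq_mul_div]
    rw [← Finset.sum_div, hwinv y]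
  have hπinvt : ∀ (t : ℕ) (y : S), ∑ x, π x * (K ^ t) x y = π y := invariant_pow π hπinv
  -- entries of K^t are nonnegative
  have hpow_nn : ∀ (t : ℕ) (x y : S), 0 ≤ (K ^ t) x y := by
    intro t
    induction t with
    | zero => intro x y; simp [Matrix.one_apply]; positivity
    | succ t ih =>
      intro x y
      rw [pow_succ, Matrix.mul_apply]
      exact Finset.sum_nonneg fun z _ => mul_nonneg (ih x z) (hnn z y)
  -- the key bound: for any invariant prob-sum vector p, distance of K^t row to p
  have key_bound : ∀ (v : S → ℝ), (∑ x, v x) = 1 → (∀ y, ∑ x, v x * K x y = v y) →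
      ∀ (t : ℕ) (x : S) (y : S), |(K ^ t) x y - v y| ≤ c ^ t * ∑ z, |(if z = x then 1 else 0) - v z| := by
    intro v hv1 hvinv t x y
    set μ : S → ℝ := fun z => (if z = x then (1 : ℝ) else 0) - v z with hμdef
    have hμ0 : ∑ z, μ z = 0 := by
      simp only [hμdef]
      rw [Finset.sum_sub_distrib, hv1]
      simp
    have hrow_eq : ∑ z, μ z * (K ^ t) z y = (K ^ t) x y - v y := by
      simp only [hμdef, sub_mul]
      rw [Finset.sum_sub_distrib, invariant_pow v hvinv t y]
      congr 1
      simp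
    have h1 := contract_pow t μ hμ0
    have h2 : |∑ z, μ z * (K ^ t) z y| ≤ ∑ y', |∑ z, μ z * (K ^ t) z y'| :=
      Finset.single_le_sum (f := fun y' => |∑ z, μ z * (K ^ t) z y'|)
        (fun y' _ => abs_nonneg _) (Finset.mem_univ y)
    rw [hrow_eq] at h2
    exact le_trans h2 h1
  have hπnn : ∀ y, 0 ≤ π y := by
    intro y
    set M : ℝ := ∑ z, |(if z = x₀ then (1:ℝ) else 0) - π z| with hMdef
    have hM0 : 0 ≤ M := Finset.sum_nonneg fun z _ => abs_nonneg _
    have hb : ∀ t : ℕ, -(c ^ t * M) ≤ π y := by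
      intro t
      have h1 := key_bound π hπsum hπinv t x₀ y
      have h2 := abs_le.mp h1
      have := hpow_nn t x₀ y
      simp only [← hMdef] at h2
      linarith [h2.2]
    have htend : Filter.Tendsto (fun t : ℕ => -(c ^ t * M)) Filter.atTop (nhds 0) := by
      have := (tendsto_pow_atTop_nhds_zero_of_lt_one hc0 hc1).mul_const M
      simpa using this.neg
    exact le_of_tendsto htend (Filter.Eventually.of_forall hb)
  refine ⟨π, ⟨hπnn, hπsum, fun y => (hπinv y).symm⟩, ?_, ?_⟩
  · -- uniqueness
    rintro π' ⟨hπ'nn, hπ'sum, hπ'inv⟩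
    have hπ'inv' : ∀ y, ∑ x, π' x * K x y = π' y := fun y => (hπ'inv y).symm
    set μ : S → ℝ := fun z => π' z - π z with hμdef
    have hμ0 : ∑ z, μ z = 0 := by
      simp only [hμdef]; rw [Finset.sum_sub_distrib, hπ'sum, hπsum]; ring
    have hconst : ∀ t : ℕ, ∑ y, |π' y - π y| ≤ c ^ t * ∑ z, |μ z| := by
      intro t
      have h1 := contract_pow t μ hμ0
      have h2 : ∀ y, ∑ z, μ z * (K ^ t) z y = π' y - π y := by
        intro y
        simp only [hμdef, sub_mul]
        rw [Finset.sum_sub_distrib, invariant_pow π' hπ'inv' t y, hπinvt t y]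
      calc ∑ y, |π' y - π y| = ∑ y, |∑ z, μ z * (K ^ t) z y| := by
            refine Finset.sum_congr rfl fun y _ => by rw [h2 y]
        _ ≤ c ^ t * ∑ z, |μ z| := h1
    have htend : Filter.Tendsto (fun t : ℕ => c ^ t * ∑ z, |μ z|) Filter.atTop (nhds 0) := by
      have := (tendsto_pow_atTop_nhds_zero_of_lt_one hc0 hc1).mul_const (∑ z, |μ z|)
      simpa using this
    have hle : ∑ y, |π' y - π y| ≤ 0 :=
      ge_of_tendsto htend (Filter.Eventually.of_forall hconst)
    have hge : 0 ≤ ∑ y, |π' y - π y| := Finset.sum_nonneg fun y _ => abs_nonneg _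
    have heq : ∑ y, |π' y - π y| = 0 := le_antisymm hle hge
    funext y
    have := (Finset.sum_eq_zero_iff_of_nonneg (fun y _ => abs_nonneg _)).mp heq y
      (Finset.mem_univ y)
    have := abs_eq_zero.mp this
    linarith [this]
  · -- geometric bound
    intro x t ht
    set μ : S → ℝ := fun z => (if z = x then (1 : ℝ) else 0) - π z with hμdef
    have hμ0 : ∑ z, μ z = 0 := by
      simp only [hμdef]
      rw [Finset.sum_sub_distrib, hπsum]
      simp
    have hμbound : ∑ z, |μ z| ≤ 2 := by
      have h1 : ∀ z, |μ z| ≤ (if z = x then (1 : ℝ) else 0) + π z := by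
        intro z
        simp only [hμdef]
        have h2 : |(if z = x then (1:ℝ) else 0) - π z| ≤ |(if z = x then (1:ℝ) else 0)| + |π z| :=
          abs_sub _ _
        have h3 : |(if z = x then (1:ℝ) else 0)| = (if z = x then (1:ℝ) else 0) := by
          split <;> simp
        rw [h3, abs_of_nonneg (hπnn z)] at h2
        exact h2
      calc ∑ z, |μ z| ≤ ∑ z, ((if z = x then (1:ℝ) else 0) + π z) :=
            Finset.sum_le_sum fun z _ => h1 z
        _ = 1 + 1 := by rw [Finset.sum_add_distrib, hπsum]; simp
        _ = 2 := by norm_num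
    have h2 : ∀ y, ∑ z, μ z * (K ^ t) z y = (K ^ t) x y - π y := by
      intro y
      simp only [hμdef, sub_mul]
      rw [Finset.sum_sub_distrib, hπinvt t y]
      congr 1
      simp
    have h1 := contract_pow t μ hμ0
    have h3 : ∑ y, |(K ^ t) x y - π y| ≤ c ^ t * ∑ z, |μ z| := by
      calc ∑ y, |(K ^ t) x y - π y| = ∑ y, |∑ z, μ z * (K ^ t) z y| := by
            refine Finset.sum_congr rfl fun y _ => by rw [h2 y]
        _ ≤ c ^ t * ∑ z, |μ z| := h1
    have hct : c ^ t = c ^ (t - 1) * c := by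
      conv_lhs => rw [show t = (t - 1) + 1 by omega]
      rw [pow_succ]
    have hcpow : 0 ≤ c ^ (t - 1) := pow_nonneg hc0 _
    calc ∑ y, |(K ^ t) x y - π y| ≤ c ^ t * ∑ z, |μ z| := h3
      _ ≤ c ^ t * 2 := mul_le_mul_of_nonneg_left hμbound (pow_nonneg hc0 _)
      _ = c ^ (t - 1) * (c * 2) := by rw [hct]; ring
      _ ≤ c ^ (t - 1) * 2 := mul_le_mul_of_nonneg_left (by linarith) hcpow
      _ ≤ (r : ℝ) * (1 - 2 * Kstar) ^ (t - 1) := by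
          rw [← hcdef]
          nlinarith [hcpow, h2r]
end

section
/- (Krichevsky–Trofimov bound.) Let m ≥ 1 and let n_1,…,n_m be natural numbers with n := n_1 + ⋯ + n_m ≥ 1. Then ∏_{j=1}^m (n_j/n)^{n_j} ≤ ( ∏_{j=1}^m Γ(n_j + 1/2) ) / ( Γ(1/2)^{m−1} · Γ(n + 1/2) ), with the convention 0^0 = 1, where Γ is the Euler Gamma function. -/
open scoped BigOperators

open Real Set

lemma kt_log_aux {s : ℝ} (h0 : 0 ≤ s) (h1 : s < 1) :
    2 * s ≤ Real.log (1 + s) - Real.log (1 - s) := by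
  set f : ℝ → ℝ := fun t => Real.log (1 + t) - Real.log (1 - t) - 2 * t with hf
  have hd : ∀ t ∈ Ioo (0:ℝ) 1, HasDerivAt f (1/(1+t) + 1/(1-t) - 2) t := by
    intro t ht
    have h1t : (1:ℝ) + t ≠ 0 := by nlinarith [ht.1]
    have h2t : (1:ℝ) - t ≠ 0 := by nlinarith [ht.2]
    have d1 : HasDerivAt (fun u : ℝ => Real.log (1 + u)) (1/(1+t)) t := by
      simpa using (((hasDerivAt_id t).const_add 1).log h1t)
    have d2 : HasDerivAt (fun u : ℝ => Real.log (1 - u)) (-1/(1-t)) t := by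
      simpa using (((hasDerivAt_id t).const_sub 1).log h2t)
    have := ((d1.sub d2).sub ((hasDerivAt_id t).const_mul 2))
    refine this.congr_deriv ?_
    ring
  have hmono : MonotoneOn f (Ico (0:ℝ) 1) := by
    apply monotoneOn_of_deriv_nonneg (convex_Ico 0 1)
    · apply ContinuousOn.sub
      apply ContinuousOn.sub
      · exact ((continuousOn_const.add continuousOn_id).log
          (fun x hx => by simp only [mem_Ico, id, Pi.add_apply, Pi.sub_apply] at *; nlinarith [hx.1]))
      · exact ((continuousOn_const.sub continuousOn_id).log
          (fun x hx => by simp only [mem_Ico, id, Pi.add_apply, Pi.sub_apply] at *; nlinarith [hx.2]))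
      · exact (continuousOn_const.mul continuousOn_id)
    · intro t ht
      rw [interior_Ico] at ht
      exact (hd t ht).differentiableAt.differentiableWithinAt
    · intro t ht
      rw [interior_Ico] at ht
      rw [(hd t ht).deriv]
      have h1 : (0:ℝ) < 1 + t := by nlinarith [ht.1]
      have h2 : (0:ℝ) < 1 - t := by nlinarith [ht.2]
      rw [sub_nonneg, div_add_div _ _ h1.ne' h2.ne', le_div_iff₀ (by positivity)]
      nlinarith [sq_nonneg t]
  have h0' : f 0 ≤ f s := hmono (by simp) (by simp [h0, h1]) h0
  simp only [hf] at h0'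
  norm_num at h0'
  linarith

lemma kt_log_bound {x : ℝ} (hx : 0 < x) :
    1 / (x + 1/2) ≤ Real.log (x + 1) - Real.log x := by
  have hs0 : (0:ℝ) ≤ 1 / (2*x+1) := by positivity
  have hs1 : 1 / (2*x+1) < 1 := by
    rw [div_lt_one (by linarith)]; linarith
  have h := kt_log_aux hs0 hs1
  have e1 : (1:ℝ) + 1/(2*x+1) = (2*x+2)/(2*x+1) := by field_simp; ring
  have e2 : (1:ℝ) - 1/(2*x+1) = (2*x)/(2*x+1) := by field_simp; ring
  rw [e1, e2, Real.log_div (by linarith) (by linarith),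
    Real.log_div (by linarith) (by linarith)] at h
  have e3 : Real.log (2*x+2) = Real.log 2 + Real.log (x+1) := by
    rw [← Real.log_mul (by norm_num) (by linarith)]; ring_nf
  have e4 : Real.log (2*x) = Real.log 2 + Real.log x := by
    rw [← Real.log_mul (by norm_num) hx.ne']
  rw [e3, e4] at h
  have : 1/(x+1/2) = 2 * (1/(2*x+1)) := by field_simp
  rw [this]; linarith

noncomputable def ktPhi : ℝ → ℝ := fun x =>
  Real.log (x + 1/2) + x * Real.log x - (x + 1) * Real.log (x + 1)

lemma ktPhi_anti : AntitoneOn ktPhi (Ici (1:ℝ)) := by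
  have hd : ∀ x ∈ Ioi (1:ℝ),
      HasDerivAt ktPhi (1/(x+1/2) + Real.log x - Real.log (x+1)) x := by
    intro x hx
    have hx1 : (1:ℝ) < x := hx
    have hx0 : (0:ℝ) < x := by linarith
    have d1 : HasDerivAt (fun u : ℝ => Real.log (u + 1/2)) (1/(x+1/2)) x := by
      exact (((hasDerivAt_id x).add_const (1/2)).log (by positivity)).congr_deriv rfl
    have d2 : HasDerivAt (fun u : ℝ => u * Real.log u) (Real.log x + 1) x := by
      have := (hasDerivAt_id x).mul (Real.hasDerivAt_log hx0.ne')
      refine this.congr_deriv ?_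
      simp only [id, one_mul, mul_inv_cancel₀ hx0.ne']
    have d3 : HasDerivAt (fun u : ℝ => (u + 1) * Real.log (u + 1)) (Real.log (x+1) + 1) x := by
      have := ((hasDerivAt_id x).add_const 1).mul
        (((hasDerivAt_id x).add_const 1).log (by positivity))
      refine this.congr_deriv ?_
      simp only [id, one_mul, mul_one_div, div_self (show x + 1 ≠ 0 by positivity)]
    have := (d1.add d2).sub d3
    refine this.congr_deriv ?_
    ring
  apply antitoneOn_of_deriv_nonpos (convex_Ici 1)
  · unfold ktPhi
    apply ContinuousOn.sub
    apply ContinuousOn.add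
    · exact ((continuousOn_id.add continuousOn_const).log
        (fun x hx => by simp only [mem_Ici, id, Pi.add_apply] at *; nlinarith))
    · exact continuousOn_id.mul (continuousOn_id.log
        (fun x hx => by simp only [mem_Ici, id, Pi.add_apply] at *; nlinarith))
    · exact (continuousOn_id.add continuousOn_const).mul
        ((continuousOn_id.add continuousOn_const).log
          (fun x hx => by simp only [mem_Ici, id, Pi.add_apply] at *; nlinarith))
  · intro x hx
    rw [interior_Ici] at hx
    exact (hd x hx).differentiableAt.differentiableWithinAt
  · intro x hx
    rw [interior_Ici] at hx
    rw [(hd x hx).deriv]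
    have := kt_log_bound (show (0:ℝ) < x by exact lt_trans one_pos hx)
    linarith




-- discrete: for 1 ≤ k ≤ n
lemma kt_H_mono_pos {k n : ℕ} (hk : 1 ≤ k) (hkn : k ≤ n) :
    ((n:ℝ) + 1/2) * (n:ℝ)^n * ((k:ℝ)+1)^(k+1) ≤ ((k:ℝ) + 1/2) * (k:ℝ)^k * ((n:ℝ)+1)^(n+1) := by
  have hk1 : (1:ℝ) ≤ (k:ℝ) := by exact_mod_cast hk
  have hn1 : (1:ℝ) ≤ (n:ℝ) := le_trans hk1 (by exact_mod_cast hkn)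
  have hphi : ktPhi (n:ℝ) ≤ ktPhi (k:ℝ) := ktPhi_anti hk1 hn1 (by exact_mod_cast hkn)
  have hL : (0:ℝ) < ((n:ℝ) + 1/2) * (n:ℝ)^n * ((k:ℝ)+1)^(k+1) := by positivity
  have hR : (0:ℝ) < ((k:ℝ) + 1/2) * (k:ℝ)^k * ((n:ℝ)+1)^(n+1) := by positivity
  rw [← Real.log_le_log_iff hL hR]
  rw [Real.log_mul (by positivity) (by positivity), Real.log_mul (by positivity) (by positivity),
      Real.log_mul (by positivity) (by positivity), Real.log_mul (by positivity) (by positivity),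
      Real.log_pow, Real.log_pow, Real.log_pow, Real.log_pow]
  unfold ktPhi at hphi
  push_cast
  linarith

lemma kt_H_mono {k n : ℕ} (hkn : k ≤ n) :
    ((n:ℝ) + 1/2) * (n:ℝ)^n * ((k:ℝ)+1)^(k+1) ≤ ((k:ℝ) + 1/2) * (k:ℝ)^k * ((n:ℝ)+1)^(n+1) := by
  rcases Nat.eq_zero_or_pos k with hk | hk
  · subst hk
    rcases Nat.eq_zero_or_pos n with hn | hn
    · subst hn; norm_num
    · have h := kt_H_mono_pos le_rfl hn
      have hp : (0:ℝ) < ((n:ℝ)+1)^(n+1) := by positivity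
      push_cast at h ⊢
      norm_num at h ⊢
      nlinarith
  · exact kt_H_mono_pos hk hkn

-- two-group lemma
lemma kt_two_group (a b : ℕ) :
    Real.Gamma (1/2) * Real.Gamma ((a:ℝ) + (b:ℝ) + 1/2) * (a:ℝ)^a * (b:ℝ)^b ≤
      Real.Gamma ((a:ℝ) + 1/2) * Real.Gamma ((b:ℝ) + 1/2) * ((a:ℝ)+(b:ℝ))^(a+b) := by
  induction b with
  | zero =>
    push_cast
    norm_num
    exact le_of_eq (by ring)
  | succ b ih =>
    have hg1 : Real.Gamma ((b:ℝ) + 1 + 1/2) = ((b:ℝ) + 1/2) * Real.Gamma ((b:ℝ) + 1/2) := by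
      rw [show (b:ℝ) + 1 + 1/2 = ((b:ℝ) + 1/2) + 1 by ring, Real.Gamma_add_one (by positivity)]
    have hg2 : Real.Gamma ((a:ℝ) + ((b:ℝ)+1) + 1/2)
        = ((a:ℝ) + (b:ℝ) + 1/2) * Real.Gamma ((a:ℝ) + (b:ℝ) + 1/2) := by
      rw [show (a:ℝ) + ((b:ℝ)+1) + 1/2 = ((a:ℝ) + (b:ℝ) + 1/2) + 1 by ring,
        Real.Gamma_add_one (by positivity)]
    have hH := kt_H_mono (k := b) (n := a + b) (Nat.le_add_left b a)
    have hbb : (0:ℝ) < (b:ℝ)^b := by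
      rcases Nat.eq_zero_or_pos b with h | h
      · subst h; norm_num
      · have : (0:ℝ) < (b:ℝ) := by exact_mod_cast h
        positivity
    have habp : (0:ℝ) < ((a:ℝ)+(b:ℝ))^(a+b) := by
      rcases Nat.eq_zero_or_pos (a+b) with h | h
      · rw [h]; norm_num
      · have : (0:ℝ) < (a:ℝ)+(b:ℝ) := by
          have : (0:ℝ) < ((a+b : ℕ):ℝ) := by exact_mod_cast h
          push_cast at this; linarith
        positivity
    have hGhalf := Real.Gamma_pos_of_pos (show (0:ℝ) < 1/2 by norm_num)
    have hGab := Real.Gamma_pos_of_pos (show (0:ℝ) < (a:ℝ)+(b:ℝ)+1/2 by positivity)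
    have hGa := Real.Gamma_pos_of_pos (show (0:ℝ) < (a:ℝ)+1/2 by positivity)
    have hGb := Real.Gamma_pos_of_pos (show (0:ℝ) < (b:ℝ)+1/2 by positivity)
    have haa : (0:ℝ) < (a:ℝ)^a := by
      rcases Nat.eq_zero_or_pos a with h | h
      · subst h; norm_num
      · have : (0:ℝ) < (a:ℝ) := by exact_mod_cast h
        positivity
    -- target: Γ(½) Γ(a+b+1+½) a^a (b+1)^{b+1} ≤ Γ(a+½) Γ(b+1+½) (a+b+1)^{a+b+1}
    push_cast
    push_cast at hg2 ih
    rw [hg1, hg2]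
    -- multiply ih by hH
    have key : (Real.Gamma (1/2) * Real.Gamma ((a:ℝ)+(b:ℝ)+1/2) * (a:ℝ)^a * (b:ℝ)^b) *
        (((a:ℝ)+(b:ℝ) + 1/2) * ((a:ℝ)+(b:ℝ))^(a+b) * ((b:ℝ)+1)^(b+1)) ≤
        (Real.Gamma ((a:ℝ)+1/2) * Real.Gamma ((b:ℝ)+1/2) * ((a:ℝ)+(b:ℝ))^(a+b)) *
        (((b:ℝ) + 1/2) * (b:ℝ)^b * ((a:ℝ)+(b:ℝ)+1)^(a+b+1)) := by
      apply mul_le_mul ih _ (by positivity) (by positivity)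
      · calc ((a:ℝ)+(b:ℝ) + 1/2) * ((a:ℝ)+(b:ℝ))^(a+b) * ((b:ℝ)+1)^(b+1)
            = (((a+b:ℕ):ℝ) + 1/2) * ((a+b:ℕ):ℝ)^(a+b) * ((b:ℝ)+1)^(b+1) := by push_cast; ring
          _ ≤ ((b:ℝ) + 1/2) * (b:ℝ)^b * (((a+b:ℕ):ℝ)+1)^(a+b+1) := hH
          _ = ((b:ℝ) + 1/2) * (b:ℝ)^b * ((a:ℝ)+(b:ℝ)+1)^(a+b+1) := by push_cast; ring
    have hpos : (0:ℝ) < (b:ℝ)^b * ((a:ℝ)+(b:ℝ))^(a+b) := by positivity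
    rw [show a + (b+1) = a + b + 1 from rfl]
    refine le_of_mul_le_mul_right ?_ hpos
    calc Real.Gamma (1/2) * (((a:ℝ)+(b:ℝ)+1/2) * Real.Gamma ((a:ℝ)+(b:ℝ)+1/2)) * (a:ℝ)^a *
          ((b:ℝ)+1)^(b+1) * ((b:ℝ)^b * ((a:ℝ)+(b:ℝ))^(a+b))
        = (Real.Gamma (1/2) * Real.Gamma ((a:ℝ)+(b:ℝ)+1/2) * (a:ℝ)^a * (b:ℝ)^b) *
          (((a:ℝ)+(b:ℝ) + 1/2) * ((a:ℝ)+(b:ℝ))^(a+b) * ((b:ℝ)+1)^(b+1)) := by ring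
      _ ≤ (Real.Gamma ((a:ℝ)+1/2) * Real.Gamma ((b:ℝ)+1/2) * ((a:ℝ)+(b:ℝ))^(a+b)) *
          (((b:ℝ) + 1/2) * (b:ℝ)^b * ((a:ℝ)+(b:ℝ)+1)^(a+b+1)) := key
      _ = Real.Gamma ((a:ℝ)+1/2) * (((b:ℝ)+1/2) * Real.Gamma ((b:ℝ)+1/2)) *
          ((a:ℝ)+((b:ℝ)+1))^(a+b+1) * ((b:ℝ)^b * ((a:ℝ)+(b:ℝ))^(a+b)) := by ring

lemma kt_finset {ι : Type*} [DecidableEq ι] (s : Finset ι) (f : ι → ℕ) :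
    Real.Gamma (1/2) ^ s.card * Real.Gamma (((∑ j ∈ s, f j : ℕ):ℝ) + 1/2) *
        ∏ j ∈ s, ((f j : ℝ)) ^ (f j) ≤
      Real.Gamma (1/2) * (∏ j ∈ s, Real.Gamma ((f j : ℝ) + 1/2)) *
        ((∑ j ∈ s, f j : ℕ):ℝ) ^ (∑ j ∈ s, f j) := by
  induction s using Finset.cons_induction with
  | empty => simp
  | cons a s ha ih =>
    rw [Finset.sum_cons, Finset.prod_cons, Finset.prod_cons, Finset.card_cons]
    set b := f a with hb
    set t := ∑ j ∈ s, f j with ht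
    have hGt := Real.Gamma_pos_of_pos (show (0:ℝ) < (t:ℝ)+1/2 by positivity)
    have hGhalf := Real.Gamma_pos_of_pos (show (0:ℝ) < 1/2 by norm_num)
    have hGbt := Real.Gamma_pos_of_pos (show (0:ℝ) < (b:ℝ)+(t:ℝ)+1/2 by positivity)
    have hbb : (0:ℝ) < (b:ℝ)^b := by
      rcases Nat.eq_zero_or_pos b with h | h
      · rw [h]; norm_num
      · have : (0:ℝ) < (b:ℝ) := by exact_mod_cast h
        positivity
    have h2 := kt_two_group b t
    -- multiply ih by Γ(½) Γ(b+t+½) b^b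
    have key := mul_le_mul_of_nonneg_left ih
      (show (0:ℝ) ≤ Real.Gamma (1/2) * Real.Gamma ((b:ℝ)+(t:ℝ)+1/2) * (b:ℝ)^b by positivity)
    refine le_of_mul_le_mul_right ?_ hGt
    calc Real.Gamma (1/2) ^ (s.card + 1) * Real.Gamma (((b + t : ℕ):ℝ) + 1/2) *
          ((b:ℝ)^b * ∏ j ∈ s, ((f j : ℝ)) ^ (f j)) * Real.Gamma ((t:ℝ)+1/2)
        = (Real.Gamma (1/2) * Real.Gamma ((b:ℝ)+(t:ℝ)+1/2) * (b:ℝ)^b) *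
          (Real.Gamma (1/2) ^ s.card * Real.Gamma (((t:ℕ):ℝ) + 1/2) *
            ∏ j ∈ s, ((f j : ℝ)) ^ (f j)) := by push_cast; ring
      _ ≤ (Real.Gamma (1/2) * Real.Gamma ((b:ℝ)+(t:ℝ)+1/2) * (b:ℝ)^b) *
          (Real.Gamma (1/2) * (∏ j ∈ s, Real.Gamma ((f j : ℝ) + 1/2)) *
            ((t:ℕ):ℝ) ^ t) := key
      _ = (Real.Gamma (1/2) * Real.Gamma ((b:ℝ)+(t:ℝ)+1/2) * (b:ℝ)^b * (t:ℝ)^t) *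
          (Real.Gamma (1/2) * ∏ j ∈ s, Real.Gamma ((f j : ℝ) + 1/2)) := by ring
      _ ≤ (Real.Gamma ((b:ℝ)+1/2) * Real.Gamma ((t:ℝ)+1/2) * ((b:ℝ)+(t:ℝ))^(b+t)) *
          (Real.Gamma (1/2) * ∏ j ∈ s, Real.Gamma ((f j : ℝ) + 1/2)) := by
            apply mul_le_mul_of_nonneg_right h2
            positivity
      _ = Real.Gamma (1/2) * (Real.Gamma ((b:ℝ)+1/2) * ∏ j ∈ s, Real.Gamma ((f j : ℝ) + 1/2)) *
          ((b + t : ℕ):ℝ) ^ (b + t) * Real.Gamma ((t:ℝ)+1/2) := by push_cast; ring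

/-- Krichevsky–Trofimov bound: for counts `n₁, …, n_m` with total `n ≥ 1`,
`∏_j (n_j/n)^{n_j} ≤ (∏_j Γ(n_j + 1/2)) / (Γ(1/2)^{m-1} Γ(n + 1/2))`,
with the convention `0^0 = 1`. -/
theorem krichevsky_trofimov_bound (m : ℕ) (hm : 1 ≤ m) (n : Fin m → ℕ)
    (hn : 1 ≤ ∑ j, n j) :
    ∏ j, ((n j : ℝ) / ((∑ j', n j' : ℕ) : ℝ)) ^ n j ≤
      (∏ j, Real.Gamma ((n j : ℝ) + 1 / 2)) /
        (Real.Gamma (1 / 2) ^ (m - 1) * Real.Gamma (((∑ j', n j' : ℕ) : ℝ) + 1 / 2)) := by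
  set N : ℕ := ∑ j', n j' with hN
  have hN0 : (0:ℝ) < (N:ℝ) := by exact_mod_cast hn
  have hGhalf := Real.Gamma_pos_of_pos (show (0:ℝ) < 1/2 by norm_num)
  have hGN := Real.Gamma_pos_of_pos (show (0:ℝ) < (N:ℝ)+1/2 by positivity)
  have hkey := kt_finset (Finset.univ : Finset (Fin m)) n
  rw [Finset.card_univ, Fintype.card_fin] at hkey
  rw [← hN] at hkey
  -- rewrite LHS
  have hL : ∏ j, ((n j : ℝ) / (N:ℝ)) ^ n j
      = (∏ j, ((n j : ℝ)) ^ n j) / (N:ℝ) ^ N := by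
    simp_rw [div_pow]
    rw [Finset.prod_div_distrib, Finset.prod_pow_eq_pow_sum, ← hN]
  rw [hL, div_le_div_iff₀ (by positivity) (by positivity)]
  obtain ⟨m', rfl⟩ : ∃ m', m = m' + 1 := ⟨m - 1, (Nat.succ_pred_eq_of_pos hm).symm⟩
  rw [Nat.add_sub_cancel]
  rw [pow_succ] at hkey
  refine le_of_mul_le_mul_left ?_ hGhalf
  calc Real.Gamma (1/2) * ((∏ j, ((n j : ℝ)) ^ n j) *
        (Real.Gamma (1/2) ^ m' * Real.Gamma ((N:ℝ) + 1/2)))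
      = Real.Gamma (1/2) ^ m' * Real.Gamma (1/2) * Real.Gamma ((N:ℝ) + 1/2) *
        ∏ j, ((n j : ℝ)) ^ n j := by ring
    _ ≤ Real.Gamma (1/2) * (∏ j, Real.Gamma ((n j : ℝ) + 1/2)) * (N:ℝ) ^ N := hkey
    _ = Real.Gamma (1/2) * ((∏ j, Real.Gamma ((n j : ℝ) + 1/2)) * (N:ℝ) ^ N) := by ring
end
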